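/- As rational functions of T, for integers n≥0, 1≤ℓ, and 0≤j≤n: q^{-n(n+1)/2} (q^{-ℓn}T;q)_n (T-q^{-j}) / ((T-1)(T-q^{-1})⋯(T-q^{-n})) = (-1)^n q^{-ℓn²-n} + ∑_{i=0, i≠j}^{n} (-1)^i q^{-(n-i)²/2-(n+i)/2} [n choose i]_{1/q} [ℓn+i choose n]_{1/q} (q^{-i}-q^{-j})/(T-q^{-i}). -/

import Mathlib

/-- The Gaussian binomial coefficient `[n choose i]_p = (p;p)_n/((p;p)_i (p;p)_{n-i})`. -/
noncomputable def qbinom (p : ℝ) (n i : ℕ) : ℝ :=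
  (∏ m ∈ Finset.range n, (1 - p ^ (m + 1))) /
    ((∏ m ∈ Finset.range i, (1 - p ^ (m + 1))) *
      ∏ m ∈ Finset.range (n - i), (1 - p ^ (m + 1)))

open Finset


lemma aux_pow (q : ℝ) (hq : q ≠ 0) (m : ℕ) : (1/q)^m = q ^ (-(m:ℤ)) := by
  rw [one_div, inv_pow, ← zpow_natCast q m, ← zpow_neg]

lemma aux_ne (q : ℝ) (hq0 : 0 < q) (hq1 : q ≠ 1) (m : ℕ) : 1 - (1/q)^(m+1) ≠ 0 := by
  rw [aux_pow q hq0.ne' (m+1), sub_ne_zero]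
  intro h
  have := zpow_right_injective₀ hq0 hq1 (a₁ := -((m:ℤ)+1)) (a₂ := 0)
  simp only [zpow_zero] at this
  have := this (by push_cast at h ⊢; linarith)
  omega

noncomputable def Gq (q : ℝ) (k : ℕ) : ℝ := ∏ s ∈ Finset.range k, (1 - (1/q) ^ (s + 1))

lemma G_ne (q : ℝ) (hq0 : 0 < q) (hq1 : q ≠ 1) (m : ℕ) : Gq q m ≠ 0 :=
  Finset.prod_ne_zero_iff.mpr fun k _ => aux_ne q hq0 hq1 k

lemma qbinom_Gq (q : ℝ) (a b : ℕ) : qbinom (1/q) a b = Gq q a / (Gq q b * Gq q (a - b)) := rfl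

lemma zpow_sum₀ {α : Type*} {q : ℝ} (hq : q ≠ 0) (s : Finset α) (f : α → ℤ) :
    q ^ (∑ a ∈ s, f a) = ∏ a ∈ s, q ^ f a := by
  classical
  induction s using Finset.cons_induction with
  | empty => simp
  | cons a s ha ih => rw [Finset.sum_cons, Finset.prod_cons, zpow_add₀ hq, ih]

set_option maxHeartbeats 1000000 in
theorem step1 (q : ℝ) (hq0 : 0 < q) (hq1 : q ≠ 1) (n m i : ℕ) (hm : n ≤ m) (hi : i ≤ n) :
    ((-1:ℝ)^i * q ^ (-((((n - i)^2 + (n + i)) / 2 : ℕ) : ℤ)) * qbinom (1/q) n i *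
        qbinom (1/q) (m + i) n) *
      ∏ k ∈ (Finset.range (n+1)).erase i, (q ^ (-(i:ℤ)) - q ^ (-(k:ℤ))) =
    q ^ (-((n*(n+1)/2 : ℕ) : ℤ)) * ∏ t ∈ Finset.range n, (1 - q ^ ((t:ℤ) - (m:ℤ)) * q ^ (-(i:ℤ))) := by
  have hq : q ≠ 0 := hq0.ne'
  have hGne : ∀ k, Gq q k ≠ 0 := G_ne q hq0 hq1
  obtain ⟨d, rfl⟩ : ∃ d, n = i + d := ⟨n - i, by omega⟩
  simp only [Nat.add_sub_cancel_left]
  -- the erase product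
  have hsplit : (range (i+d+1)).erase i = range i ∪ Finset.Ico (i+1) (i+d+1) := by
    ext x
    simp only [mem_erase, mem_range, mem_union, Finset.mem_Ico]
    omega
  have hdisj : Disjoint (range i) (Finset.Ico (i+1) (i+d+1)) := by
    rw [Finset.disjoint_left]
    intro x hx hx'
    simp only [mem_range] at hx
    simp only [Finset.mem_Ico] at hx'
    omega
  have h1 : ∏ k ∈ range i, (q ^ (-(i:ℤ)) - q ^ (-(k:ℤ)))
      = (-1:ℝ)^i * q ^ (-∑ k ∈ range i, (k:ℤ)) * Gq q i := by
    have e : ∀ k ∈ range i, q ^ (-(i:ℤ)) - q ^ (-(k:ℤ))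
        = (-1) * q ^ (-(k:ℤ)) * (1 - (1/q) ^ (i - k)) := by
      intro k hk
      have hk' : k < i := mem_range.mp hk
      rw [aux_pow q hq]
      have e2 : q ^ (-(k:ℤ)) * q ^ (-((i - k : ℕ):ℤ)) = q ^ (-(i:ℤ)) := by
        rw [← zpow_add₀ hq]; congr 1; omega
      linear_combination -e2
    rw [Finset.prod_congr rfl e, Finset.prod_mul_distrib, Finset.prod_mul_distrib,
      Finset.prod_const, Finset.card_range,
      show (-∑ k ∈ range i, (k:ℤ)) = ∑ k ∈ range i, -(k:ℤ) from by rw [Finset.sum_neg_distrib],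
      zpow_sum₀ hq]
    unfold Gq
    congr 1
    rw [← Finset.prod_range_reflect]
    refine Finset.prod_congr rfl fun k hk => ?_
    have hk' : k < i := mem_range.mp hk
    rw [show i - (i - 1 - k) = k + 1 by omega]
  have h2 : ∏ k ∈ Finset.Ico (i+1) (i+d+1), (q ^ (-(i:ℤ)) - q ^ (-(k:ℤ)))
      = q ^ (-((i*d:ℕ):ℤ)) * Gq q d := by
    rw [Finset.prod_Ico_eq_prod_range, show i + d + 1 - (i + 1) = d by omega]
    have e : ∀ k ∈ range d, q ^ (-(i:ℤ)) - q ^ (-((i+1+k:ℕ):ℤ))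
        = q ^ (-(i:ℤ)) * (1 - (1/q) ^ (k + 1)) := by
      intro k hk
      rw [aux_pow q hq]
      have e2 : q ^ (-(i:ℤ)) * q ^ (-((k+1:ℕ):ℤ)) = q ^ (-((i+1+k:ℕ):ℤ)) := by
        rw [← zpow_add₀ hq]; congr 1; omega
      push_cast at e2 ⊢
      linear_combination e2
    unfold Gq
    rw [Finset.prod_congr rfl e, Finset.prod_mul_distrib, Finset.prod_const, Finset.card_range,
      ← zpow_natCast (q ^ (-(i:ℤ))) d, ← zpow_mul]
    congr 2
    push_cast
    ring
  have h3 : Gq q (m + i) = Gq q (m + i - (i + d)) *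
      ∏ t ∈ range (i+d), (1 - q ^ ((t:ℤ) - (m:ℤ)) * q ^ (-(i:ℤ))) := by
    have e : ∀ t ∈ range (i+d), (1 - q ^ ((t:ℤ) - (m:ℤ)) * q ^ (-(i:ℤ)))
        = 1 - (1/q) ^ ((m + i - (i+d)) + ((i+d) - 1 - t) + 1) := by
      intro t ht
      have ht' : t < i + d := mem_range.mp ht
      rw [aux_pow q hq, ← zpow_add₀ hq]
      congr 2
      omega
    unfold Gq
    rw [Finset.prod_congr rfl e]
    rw [Finset.prod_range_reflect (fun t => 1 - (1/q) ^ ((m + i - (i+d)) + t + 1)) (i+d)]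
    rw [← Finset.prod_range_add (fun s => 1 - (1/q) ^ (s + 1)) (m + i - (i+d)) (i+d),
      show m + i - (i + d) + (i + d) = m + i by omega]
  -- exponent bookkeeping
  obtain ⟨k1, hk1⟩ := Nat.even_mul_succ_self d
  have hdd : d^2 + d = k1 + k1 := by
    calc d^2 + d = d*(d+1) := by ring
    _ = k1 + k1 := hk1
  have hh : d^2 + (i+d+i) = (k1+i) + (k1+i) := by linarith
  have he1 : (2:ℤ) * (((d^2 + (i+d+i)) / 2 : ℕ) : ℤ) = (d:ℤ)^2 + ((i:ℤ)+d+i) := by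
    rw [hh, show ((k1+i) + (k1+i))/2 = k1 + i by omega]
    have : ((d:ℤ))^2 + d = k1 + k1 := by exact_mod_cast hdd
    push_cast
    linarith
  obtain ⟨k2, hk2⟩ := Nat.even_mul_succ_self (i+d)
  have he3 : (2:ℤ) * (((i+d) * ((i+d)+1) / 2 : ℕ) : ℤ) = ((i:ℤ)+d) * ((i:ℤ)+d+1) := by
    rw [show (i+d) * ((i+d)+1) = k2 + k2 from hk2, show (k2+k2)/2 = k2 by omega]
    have : ((i:ℤ)+d) * ((i:ℤ)+d+1) = k2 + k2 := by exact_mod_cast hk2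
    push_cast
    linarith
  have hgauss : (2:ℤ) * (∑ k ∈ range i, (k:ℤ)) = (i:ℤ)*i - i := by
    have h := Finset.sum_range_id_mul_two i
    have h1' : i*(i-1) + i = i*i := by
      cases i with
      | zero => simp
      | succ i' => simp only [Nat.succ_sub_one]; ring
    have hc : (∑ k ∈ range i, (k:ℤ)) = ((∑ k ∈ range i, k : ℕ):ℤ) := by push_cast; rfl
    have h2' : ((∑ k ∈ range i, k : ℕ):ℤ) * 2 = ((i*(i-1) : ℕ):ℤ) := by exact_mod_cast congrArg (Nat.cast : ℕ → ℤ) h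
    have h3' : ((i*(i-1) : ℕ):ℤ) + i = (i:ℤ)*i := by exact_mod_cast congrArg (Nat.cast : ℕ → ℤ) h1'
    rw [hc]
    linarith
  have hid : ((i*d:ℕ):ℤ) = (i:ℤ)*d := by push_cast; ring
  have hexp : -((((i+d) * ((i+d)+1) / 2 : ℕ)):ℤ) =
      -(((d^2 + (i+d+i)) / 2 : ℕ):ℤ) + (-(∑ k ∈ range i, (k:ℤ))) + (-((i*d:ℕ):ℤ)) := by
    have hdb : (2:ℤ) * (-((((i+d) * ((i+d)+1) / 2 : ℕ)):ℤ)) =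
        2 * (-(((d^2 + (i+d+i)) / 2 : ℕ):ℤ) + (-(∑ k ∈ range i, (k:ℤ))) + (-((i*d:ℕ):ℤ))) := by
      linear_combination -he3 + he1 + hgauss + 2*hid
    linarith
  have hE : q ^ (-((((i+d) * ((i+d)+1) / 2 : ℕ)):ℤ)) =
      q ^ (-(((d^2 + (i+d+i)) / 2 : ℕ):ℤ)) * q ^ (-(∑ k ∈ range i, (k:ℤ))) * q ^ (-((i*d:ℕ):ℤ)) := by
    rw [← zpow_add₀ hq, ← zpow_add₀ hq, hexp]
  have h3' : (∏ t ∈ range (i+d), (1 - q ^ ((t:ℤ) - (m:ℤ)) * q ^ (-(i:ℤ))))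
      = Gq q (m+i) / Gq q (m + i - (i + d)) := by
    rw [h3, mul_div_cancel_left₀ _ (hGne _)]
  rw [hsplit, Finset.prod_union hdisj, h1, h2, h3', hE, qbinom_Gq, qbinom_Gq]
  simp only [Nat.add_sub_cancel_left]
  have n1 := hGne (i+d)
  have n2 := hGne i
  have n3 := hGne d
  have n4 := hGne (m + i - (i + d))
  have n5 := hGne (m + i)
  have hpow : ((-1:ℝ))^i * (-1)^i = 1 := by
    rw [← pow_add]
    exact Even.neg_one_pow ⟨i, rfl⟩
  field_simp
  linear_combination hpow


open Polynomial in
set_option maxHeartbeats 1000000 in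
/-- Partial fraction decomposition of
`q^{-n(n+1)/2} (q^{-ℓn}T;q)_n (T-q^{-j}) / ((T-1)(T-q^{-1})⋯(T-q^{-n}))`. -/
theorem partial_fraction_H (q : ℝ) (hq0 : 0 < q) (hq1 : q ≠ 1) (n L j : ℕ)
    (hL : 1 ≤ L) (hj : j ≤ n)
    (T : ℝ) (hT : (∏ i ∈ Finset.range (n + 1), (T - q ^ (-(i : ℤ)))) ≠ 0) :
    q ^ (-((n * (n + 1) / 2 : ℕ) : ℤ)) *
        (∏ t ∈ Finset.range n, (1 - q ^ ((t : ℤ) - (L * n : ℤ)) * T)) *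
        (T - q ^ (-(j : ℤ))) /
        (∏ i ∈ Finset.range (n + 1), (T - q ^ (-(i : ℤ)))) =
      (-1 : ℝ) ^ n * q ^ (-((L * n ^ 2 + n : ℕ) : ℤ)) +
        ∑ i ∈ (Finset.range (n + 1)).erase j,
          (-1 : ℝ) ^ i * q ^ (-((((n - i) ^ 2 + (n + i)) / 2 : ℕ) : ℤ)) *
            qbinom (1 / q) n i * qbinom (1 / q) (L * n + i) n *
            (q ^ (-(i : ℤ)) - q ^ (-(j : ℤ))) / (T - q ^ (-(i : ℤ))) := by
  classical
  have hq : q ≠ 0 := hq0.ne'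
  simp only [show ((L:ℤ) * (n:ℤ)) = ((L * n : ℕ) : ℤ) from by push_cast; ring]
  set m := L * n with hmdef
  have hm : n ≤ m := Nat.le_mul_of_pos_left n hL
  have hmZ : (m:ℤ) = (L:ℤ) * n := by rw [hmdef]; push_cast; ring
  set c : ℕ → ℝ := fun i => (-1:ℝ)^i * q ^ (-((((n - i)^2 + (n + i)) / 2 : ℕ) : ℤ)) *
    qbinom (1/q) n i * qbinom (1/q) (m + i) n with hc
  set A : ℝ := (-1:ℝ)^n * q ^ (-((L * n^2 + n : ℕ) : ℤ)) with hA
  -- the constant identity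
  have htri : (2:ℤ) * ((n*(n+1)/2 : ℕ) : ℤ) = (n:ℤ) * ((n:ℤ)+1) := by
    obtain ⟨k2, hk2⟩ := Nat.even_mul_succ_self n
    rw [show n * (n+1) = k2 + k2 from hk2, show (k2+k2)/2 = k2 by omega]
    have : ((n:ℤ)) * ((n:ℤ)+1) = k2 + k2 := by exact_mod_cast hk2
    push_cast
    linarith
  have hgauss : (2:ℤ) * (∑ k ∈ Finset.range n, (k:ℤ)) = (n:ℤ)*n - n := by
    have h := Finset.sum_range_id_mul_two n
    have h1' : n*(n-1) + n = n*n := by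
      cases n with
      | zero => simp
      | succ n' => simp only [Nat.succ_sub_one]; ring
    have hcc : (∑ k ∈ Finset.range n, (k:ℤ)) = ((∑ k ∈ Finset.range n, k : ℕ):ℤ) := by
      push_cast; rfl
    have h2' : ((∑ k ∈ Finset.range n, k : ℕ):ℤ) * 2 = ((n*(n-1) : ℕ):ℤ) := by
      exact_mod_cast congrArg (Nat.cast : ℕ → ℤ) h
    have h3' : ((n*(n-1) : ℕ):ℤ) + n = (n:ℤ)*n := by
      exact_mod_cast congrArg (Nat.cast : ℕ → ℤ) h1'
    rw [hcc]; linarith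
  have hAconst : q ^ (-((n*(n+1)/2 : ℕ) : ℤ)) *
      ∏ t ∈ Finset.range n, (-(q ^ ((t:ℤ) - (m:ℤ)))) = A := by
    have e : ∀ t ∈ Finset.range n, (-(q ^ ((t:ℤ) - (m:ℤ)))) = (-1) * q ^ ((t:ℤ) - (m:ℤ)) :=
      fun t _ => by ring
    rw [Finset.prod_congr rfl e, Finset.prod_mul_distrib, Finset.prod_const, Finset.card_range,
      ← zpow_sum₀ hq, hA]
    have hsum : (∑ t ∈ Finset.range n, ((t:ℤ) - (m:ℤ)))
        = (∑ t ∈ Finset.range n, (t:ℤ)) - n * m := by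
      rw [Finset.sum_sub_distrib, Finset.sum_const, Finset.card_range, nsmul_eq_mul]
    have hcast : ((L * n^2 + n : ℕ):ℤ) = (L:ℤ)*(n:ℤ)^2 + n := by push_cast; ring
    have hexp : -((n*(n+1)/2 : ℕ) : ℤ) + (∑ t ∈ Finset.range n, ((t:ℤ) - (m:ℤ)))
        = -((L * n^2 + n : ℕ):ℤ) := by
      rw [hsum, hcast]
      have h2 : (2:ℤ) * (-((n*(n+1)/2 : ℕ) : ℤ) + ((∑ t ∈ Finset.range n, (t:ℤ)) - n * m))
          = 2 * (-((L:ℤ)*(n:ℤ)^2 + n)) := by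
        linear_combination -htri + hgauss - 2*(n:ℤ)*hmZ
      linarith
    have hz : q ^ (-((n*(n+1)/2 : ℕ) : ℤ)) * q ^ (∑ a ∈ Finset.range n, ((a:ℤ) - (m:ℤ)))
        = q ^ (-((L * n^2 + n : ℕ):ℤ)) := by rw [← zpow_add₀ hq, hexp]
    linear_combination ((-1:ℝ)^n) * hz
  -- polynomial identity
  set D : Polynomial ℝ := ∏ k ∈ Finset.range (n+1), (X - C (q ^ (-(k:ℤ)))) with hD
  set M : Polynomial ℝ := (∏ t ∈ Finset.range n, (X - C (q ^ ((m:ℤ) - (t:ℤ))))) *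
    (X - C (q ^ (-(j:ℤ)))) with hM
  set W : Polynomial ℝ := ∑ i ∈ (Finset.range (n+1)).erase j,
    C (c i * (q ^ (-(i:ℤ)) - q ^ (-(j:ℤ)))) *
      ∏ k ∈ (Finset.range (n+1)).erase i, (X - C (q ^ (-(k:ℤ)))) with hW
  have hMonicM : M.Monic :=
    (monic_prod_of_monic _ _ fun t _ => monic_X_sub_C _).mul (monic_X_sub_C _)
  have hMonicD : D.Monic := monic_prod_of_monic _ _ fun k _ => monic_X_sub_C _
  have hMdeg : M.natDegree = n + 1 := by
    rw [hM, Monic.natDegree_mul (monic_prod_of_monic _ _ fun t _ => monic_X_sub_C _)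
      (monic_X_sub_C _), natDegree_prod_of_monic _ _ (fun t _ => monic_X_sub_C _)]
    simp [natDegree_X_sub_C]
  have hDdeg : D.natDegree = n + 1 := by
    rw [hD, natDegree_prod_of_monic _ _ (fun t _ => monic_X_sub_C _)]
    simp [natDegree_X_sub_C]
  have hMDdeg : (M - D).natDegree ≤ n := by
    by_cases h0 : M - D = 0
    · simp [h0]
    · have hlt : (M - D).natDegree < M.natDegree := by
        apply natDegree_lt_natDegree h0
        apply degree_sub_lt
        · rw [degree_eq_natDegree hMonicM.ne_zero, degree_eq_natDegree hMonicD.ne_zero,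
            hMdeg, hDdeg]
        · exact hMonicM.ne_zero
        · rw [hMonicM.leadingCoeff, hMonicD.leadingCoeff]
      omega
  have hWdeg : W.natDegree ≤ n := by
    apply natDegree_sum_le_of_forall_le
    intro i hi
    refine le_trans (natDegree_C_mul_le _ _) ?_
    rw [natDegree_prod_of_monic _ _ (fun k _ => monic_X_sub_C _)]
    simp only [natDegree_X_sub_C, Finset.sum_const, smul_eq_mul, mul_one]
    rw [Finset.card_erase_of_mem (Finset.mem_of_mem_erase hi |> fun _ => by
      exact Finset.mem_range.mpr (by have := Finset.mem_range.mp (Finset.mem_of_mem_erase hi); omega))]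
    simp
  -- the factorized form of the numerator polynomial
  have hP : C (q ^ (-((n*(n+1)/2 : ℕ) : ℤ))) *
      (∏ t ∈ Finset.range n, (1 - C (q ^ ((t:ℤ) - (m:ℤ))) * X)) * (X - C (q ^ (-(j:ℤ))))
      = C A * M := by
    have hfac : ∀ t ∈ Finset.range n, (1 - C (q ^ ((t:ℤ) - (m:ℤ))) * X)
        = C (-(q ^ ((t:ℤ) - (m:ℤ)))) * (X - C (q ^ ((m:ℤ) - (t:ℤ)))) := by
      intro t _
      have h1 : q ^ ((t:ℤ) - (m:ℤ)) * q ^ ((m:ℤ) - (t:ℤ)) = 1 := by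
        rw [← zpow_add₀ hq]; norm_num
      have hCb : C (q ^ ((t:ℤ) - (m:ℤ))) * C (q ^ ((m:ℤ) - (t:ℤ))) = (1 : Polynomial ℝ) := by
        rw [← C_mul, h1, map_one]
      simp only [map_neg]
      linear_combination -hCb
    have hAC : C A = C (q ^ (-((n*(n+1)/2 : ℕ) : ℤ))) *
        ∏ t ∈ Finset.range n, C (-(q ^ ((t:ℤ) - (m:ℤ)))) := by
      rw [← map_prod, ← C_mul, hAconst]
    rw [Finset.prod_congr rfl hfac, Finset.prod_mul_distrib, hAC, hM]
    ring
  -- evaluations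
  have hinj : Function.Injective (fun k : ℕ => q ^ (-(k:ℤ))) := by
    intro a b hab
    have := zpow_right_injective₀ hq0 hq1 hab
    omega
  have hevalD : ∀ i ∈ Finset.range (n+1), D.eval (q ^ (-(i:ℤ))) = 0 := by
    intro i hi
    rw [hD, eval_prod]
    exact Finset.prod_eq_zero hi (by simp)
  have hevalW : ∀ i ∈ Finset.range (n+1),
      W.eval (q ^ (-(i:ℤ))) = if i = j then 0 else
        c i * (q ^ (-(i:ℤ)) - q ^ (-(j:ℤ))) *
          ∏ k ∈ (Finset.range (n+1)).erase i, (q ^ (-(i:ℤ)) - q ^ (-(k:ℤ))) := by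
    intro i hi
    rw [hW, eval_finset_sum]
    by_cases hij : i = j
    · subst hij
      rw [if_pos rfl]
      apply Finset.sum_eq_zero
      intro i' hi'
      have hne : i' ≠ i := Finset.ne_of_mem_erase hi'
      rw [eval_mul, eval_prod]
      have : (fun k => ((X : Polynomial ℝ) - C (q ^ (-(k:ℤ)))).eval (q ^ (-(i:ℤ)))) i = 0 := by
        simp
      rw [Finset.prod_eq_zero (Finset.mem_erase.mpr ⟨(Ne.symm hne), hi⟩) this, mul_zero]
    · rw [if_neg hij]
      rw [Finset.sum_eq_single_of_mem i (Finset.mem_erase.mpr ⟨hij, hi⟩)]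
      · rw [eval_mul, eval_C, eval_prod]
        simp
      · intro i' hi' hne
        rw [eval_mul, eval_prod]
        have : (fun k => ((X : Polynomial ℝ) - C (q ^ (-(k:ℤ)))).eval (q ^ (-(i:ℤ)))) i = 0 := by
          simp
        rw [Finset.prod_eq_zero (Finset.mem_erase.mpr ⟨(Ne.symm hne), hi⟩) this, mul_zero]
  -- residue identity
  have hr : ∀ i : ℕ, i ≤ n → A * (∏ t ∈ Finset.range n, (q ^ (-(i:ℤ)) - q ^ ((m:ℤ) - (t:ℤ))))
      = c i * ∏ k ∈ (Finset.range (n+1)).erase i, (q ^ (-(i:ℤ)) - q ^ (-(k:ℤ))) := by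
    intro i hi
    have hstep := step1 q hq0 hq1 n m i hm hi
    have e : ∀ t ∈ Finset.range n, (q ^ (-(i:ℤ)) - q ^ ((m:ℤ) - (t:ℤ)))
        = (-(q ^ ((m:ℤ) - (t:ℤ)))) * (1 - q ^ ((t:ℤ) - (m:ℤ)) * q ^ (-(i:ℤ))) := by
      intro t _
      have h1 : q ^ ((m:ℤ) - (t:ℤ)) * (q ^ ((t:ℤ) - (m:ℤ)) * q ^ (-(i:ℤ))) = q ^ (-(i:ℤ)) := by
        rw [← zpow_add₀ hq, ← zpow_add₀ hq]; congr 1; ring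
      linear_combination -h1
    rw [Finset.prod_congr rfl e, Finset.prod_mul_distrib, ← mul_assoc]
    have hone : A * ∏ t ∈ Finset.range n, (-(q ^ ((m:ℤ) - (t:ℤ))))
        = q ^ (-((n*(n+1)/2 : ℕ) : ℤ)) := by
      rw [← hAconst, mul_assoc, ← Finset.prod_mul_distrib]
      have e2 : ∀ t ∈ Finset.range n, (-(q ^ ((t:ℤ) - (m:ℤ)))) * (-(q ^ ((m:ℤ) - (t:ℤ)))) = 1 := by
        intro t _; rw [neg_mul_neg, ← zpow_add₀ hq]; norm_num
      rw [Finset.prod_congr rfl e2, Finset.prod_const_one, mul_one]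
    rw [hone, hc]
    exact hstep.symm
  -- the polynomial identity
  have hF0 : C A * (M - D) - W = 0 := by
    apply eq_zero_of_natDegree_lt_card_of_eval_eq_zero' _
      ((Finset.range (n+1)).image (fun k : ℕ => q ^ (-(k:ℤ))))
    · intro x hx
      obtain ⟨i, hi, rfl⟩ := Finset.mem_image.mp hx
      rw [eval_sub, eval_mul, eval_C, eval_sub, hevalD i hi, hevalW i hi]
      by_cases hij : i = j
      · subst hij
        rw [if_pos rfl, hM, eval_mul, eval_sub, eval_X, eval_C, sub_self, mul_zero]
        ring
      · rw [if_neg hij, hM, eval_mul, eval_sub, eval_X, eval_C, eval_prod]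
        simp only [eval_sub, eval_X, eval_C]
        have hin : i ≤ n := by have := Finset.mem_range.mp hi; omega
        have h := hr i hin
        linear_combination (q ^ (-(i:ℤ)) - q ^ (-(j:ℤ))) * h
    · rw [Finset.card_image_of_injective _ hinj, Finset.card_range]
      have hle : (C A * (M - D) - W).natDegree ≤ n :=
        le_trans (natDegree_sub_le _ _)
          (max_le (le_trans (natDegree_C_mul_le _ _) hMDdeg) hWdeg)
      omega
  have hpoly : C (q ^ (-((n*(n+1)/2 : ℕ) : ℤ))) *
      (∏ t ∈ Finset.range n, (1 - C (q ^ ((t:ℤ) - (m:ℤ))) * X)) * (X - C (q ^ (-(j:ℤ))))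
      = C A * D + W := by
    have h := sub_eq_zero.mp hF0
    rw [hP]
    linear_combination h
  have hscal := congrArg (Polynomial.eval T) hpoly
  simp only [hD, hW, eval_mul, eval_add, eval_sub, eval_C, eval_X, eval_prod, eval_finset_sum,
    eval_one] at hscal
  rw [hscal, add_div, mul_div_cancel_right₀ A hT, Finset.sum_div]
  congr 1
  apply Finset.sum_congr rfl
  intro i hi
  have hirange : i ∈ Finset.range (n+1) := Finset.mem_of_mem_erase hi
  have hsplit : ∏ k ∈ Finset.range (n+1), (T - q ^ (-(k:ℤ)))
      = (T - q ^ (-(i:ℤ))) * ∏ k ∈ (Finset.range (n+1)).erase i, (T - q ^ (-(k:ℤ))) :=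
    (Finset.mul_prod_erase _ _ hirange).symm
  have hEne : (∏ k ∈ (Finset.range (n+1)).erase i, (T - q ^ (-(k:ℤ)))) ≠ 0 := by
    intro h
    exact hT (by rw [hsplit, h, mul_zero])
  rw [hsplit, mul_div_mul_right _ _ hEne, hc]
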